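/- (Lemma 2) The approximate throughput reduction function Λ̄ : Finset E → ℝ is monotone and submodular. -/

import Mathlib

open Finset

/-- Auxiliary: for `a ≤ b`, the map `t ↦ min a t - min b t` is antitone. -/
lemma min_marg_aux {a b s t : ℝ} (hab : a ≤ b) (hst : s ≤ t) :
    min a t - min b t ≤ min a s - min b s := by
  simp only [min_def]
  split_ifs <;> linarith

/-- Lemma 2: the approximate throughput reduction function `Λ̄` is monotone and
submodular. -/
theorem approx_reduction_monotone_submodular
    {E : Type*} [Fintype E] [DecidableEq E]
    (k : ℕ) (hk : 1 ≤ k)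
    (p : Fin k → Finset E) (hp : ∀ i, (p i).Nonempty)
    (lam : Fin k → ℝ) (hlam : ∀ i, 0 < lam i)
    (C : E → ℝ) (γ : ℝ) (hγ : 0 ≤ γ) (hγC : ∀ e, γ ≤ C e) :
    let Ct : Finset E → E → ℝ := fun A e => if e ∈ A then C e - γ else C e
    let E1 : Finset E :=
      univ.filter (fun e => ({i | e ∈ p i} : Finset (Fin k)).card = 1)
    let E2 : Finset E :=
      univ.filter (fun e => 2 ≤ ({i | e ∈ p i} : Finset (Fin k)).card)
    let S : E → ℝ := fun e => ∑ j ∈ ({j | e ∈ p j} : Finset (Fin k)), lam j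
    let lam1 : Fin k → Finset E → ℝ := fun i A =>
      if h : (p i ∩ E1).Nonempty then min (lam i) ((p i ∩ E1).inf' h (Ct A))
      else lam i
    let Δ : Fin k → Finset E → ℝ := fun i A =>
      ∏ e ∈ (p i ∩ E2).filter (fun e => Ct A e ≤ S e), Ct A e / S e
    let lam2 : Fin k → Finset E → ℝ := fun i A => lam1 i A * Δ i A
    let Lbar : Finset E → ℝ := fun A => ∑ i : Fin k, (lam i - lam2 i A)
    (∀ A B : Finset E, A ⊆ B → Lbar A ≤ Lbar B) ∧
    (∀ A B : Finset E, A ⊆ B → ∀ e : E,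
      Lbar (insert e A) - Lbar A ≥ Lbar (insert e B) - Lbar B) := by
  intro Ct E1 E2 S lam1 Δ lam2 Lbar
  -- Basic facts about Ct
  have hCt_nonneg : ∀ (A : Finset E) e, 0 ≤ Ct A e := by
    intro A e
    simp only [Ct]
    split <;> linarith [hγC e, hγ]
  have hCt_mono : ∀ (A B : Finset E), A ⊆ B → ∀ e, Ct B e ≤ Ct A e := by
    intro A B hAB e
    simp only [Ct]
    by_cases hA : e ∈ A
    · simp [hA, hAB hA]
    · split <;> linarith
  have hCt_ne : ∀ (A : Finset E) (x e : E), e ≠ x → Ct (insert x A) e = Ct A e := by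
    intro A x e he
    simp only [Ct, Finset.mem_insert]
    simp [he]
  have hCt_self : ∀ (A : Finset E) (x : E), Ct (insert x A) x = C x - γ := by
    intro A x; simp [Ct]
  have hCt_notmem : ∀ (A : Finset E) (x : E), x ∉ A → Ct A x = C x := by
    intro A x hx; simp [Ct, hx]
  -- S is positive on E2
  have hS_pos : ∀ e ∈ E2, 0 < S e := by
    intro e he
    simp only [E2, Finset.mem_filter] at he
    refine Finset.sum_pos (fun j _ => hlam j) ?_
    exact Finset.card_pos.mp (by omega)
  -- Rewrite Δ as a product of min's over the whole set p i ∩ E2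
  have hΔ_eq : ∀ (i : Fin k) (A : Finset E),
      Δ i A = ∏ e ∈ p i ∩ E2, min (Ct A e / S e) 1 := by
    intro i A
    simp only [Δ]
    rw [Finset.prod_filter]
    refine Finset.prod_congr rfl fun e he => ?_
    have hSe := hS_pos e (Finset.mem_of_mem_inter_right he)
    by_cases h : Ct A e ≤ S e
    · rw [if_pos h]
      exact (min_eq_left ((div_le_one hSe).2 h)).symm
    · rw [if_neg h]
      exact (min_eq_right ((one_le_div hSe).2 (le_of_not_ge h))).symm
  have hfac_nonneg : ∀ (A : Finset E) (e : E), e ∈ E2 → 0 ≤ min (Ct A e / S e) 1 :=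
    fun A e he => le_min (div_nonneg (hCt_nonneg A e) (hS_pos e he).le) zero_le_one
  have hfac_mono : ∀ (A B : Finset E), A ⊆ B → ∀ e ∈ E2,
      min (Ct B e / S e) 1 ≤ min (Ct A e / S e) 1 := by
    intro A B hAB e he
    exact min_le_min ((div_le_div_iff_of_pos_right (hS_pos e he)).2 (hCt_mono A B hAB e)) le_rfl
  have hΔ_nonneg : ∀ (i : Fin k) (A : Finset E), 0 ≤ Δ i A := by
    intro i A
    rw [hΔ_eq]
    exact Finset.prod_nonneg fun e he =>
      hfac_nonneg A e (Finset.mem_of_mem_inter_right he)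
  have hΔ_anti : ∀ (i : Fin k) (A B : Finset E), A ⊆ B → Δ i B ≤ Δ i A := by
    intro i A B hAB
    rw [hΔ_eq, hΔ_eq]
    exact Finset.prod_le_prod
      (fun e he => hfac_nonneg B e (Finset.mem_of_mem_inter_right he))
      (fun e he => hfac_mono A B hAB e (Finset.mem_of_mem_inter_right he))
  have hΔ_notmem : ∀ (i : Fin k) (A : Finset E) (x : E), x ∉ p i ∩ E2 →
      Δ i (insert x A) = Δ i A := by
    intro i A x hx
    rw [hΔ_eq, hΔ_eq]
    refine Finset.prod_congr rfl fun e he => ?_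
    rw [hCt_ne A x e (fun h => hx (h ▸ he))]
  -- Δ has increasing marginals (supermodular)
  have hΔ_super : ∀ (i : Fin k) (A B : Finset E), A ⊆ B → ∀ x, x ∉ B →
      Δ i (insert x A) - Δ i A ≤ Δ i (insert x B) - Δ i B := by
    intro i A B hAB x hxB
    have hxA : x ∉ A := fun h => hxB (hAB h)
    by_cases hx : x ∈ p i ∩ E2
    · have hxE2 : x ∈ E2 := Finset.mem_of_mem_inter_right hx
      have hSx := hS_pos x hxE2
      have key : ∀ (D : Finset E), x ∉ D →
          Δ i (insert x D) - Δ i D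
            = (min ((C x - γ) / S x) 1 - min (C x / S x) 1) *
              ∏ e ∈ (p i ∩ E2).erase x, min (Ct D e / S e) 1 := by
        intro D hxD
        rw [hΔ_eq, hΔ_eq, ← Finset.mul_prod_erase _ _ hx,
          ← Finset.mul_prod_erase (p i ∩ E2) (fun e => min (Ct D e / S e) 1) hx]
        have h1 : ∀ e ∈ (p i ∩ E2).erase x,
            min (Ct (insert x D) e / S e) 1 = min (Ct D e / S e) 1 := by
          intro e he
          rw [hCt_ne D x e (Finset.ne_of_mem_erase he)]
        rw [Finset.prod_congr rfl h1, hCt_self, hCt_notmem D x hxD]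
        ring
      rw [key A hxA, key B hxB]
      have hd : min ((C x - γ) / S x) 1 - min (C x / S x) 1 ≤ 0 := by
        have h0 : (C x - γ) / S x ≤ C x / S x :=
          (div_le_div_iff_of_pos_right hSx).2 (by linarith)
        have := min_le_min h0 (le_refl (1 : ℝ))
        linarith
      refine mul_le_mul_of_nonpos_left ?_ hd
      exact Finset.prod_le_prod
        (fun e he => hfac_nonneg B e
          (Finset.mem_of_mem_inter_right (Finset.mem_of_mem_erase he)))
        (fun e he => hfac_mono A B hAB e
          (Finset.mem_of_mem_inter_right (Finset.mem_of_mem_erase he)))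
    · rw [hΔ_notmem i A x hx, hΔ_notmem i B x hx]
      simp
  -- lam1 facts
  have hinf_mono : ∀ (A B : Finset E), A ⊆ B → ∀ (T : Finset E) (h : T.Nonempty),
      T.inf' h (Ct B) ≤ T.inf' h (Ct A) := by
    intro A B hAB T h
    obtain ⟨e, he, hee⟩ := Finset.exists_mem_eq_inf' h (Ct A)
    rw [hee]
    exact le_trans (Finset.inf'_le _ he) (hCt_mono A B hAB e)
  have hlam1_nonneg : ∀ (i : Fin k) (A : Finset E), 0 ≤ lam1 i A := by
    intro i A
    simp only [lam1]
    split
    · exact le_min (hlam i).le (Finset.le_inf' _ _ fun e _ => hCt_nonneg A e)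
    · exact (hlam i).le
  have hlam1_anti : ∀ (i : Fin k) (A B : Finset E), A ⊆ B → lam1 i B ≤ lam1 i A := by
    intro i A B hAB
    simp only [lam1]
    by_cases h : (p i ∩ E1).Nonempty
    · simp only [dif_pos h]
      exact min_le_min le_rfl (hinf_mono A B hAB _ h)
    · simp only [dif_neg h]
      exact le_rfl
  have hlam1_notmem : ∀ (i : Fin k) (A : Finset E) (x : E), x ∉ p i ∩ E1 →
      lam1 i (insert x A) = lam1 i A := by
    intro i A x hx
    simp only [lam1]
    by_cases h : (p i ∩ E1).Nonempty
    · simp only [dif_pos h]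
      congr 1
      exact Finset.inf'_congr h rfl fun e he => hCt_ne A x e (fun h' => hx (h' ▸ he))
    · simp only [dif_neg h]
  -- lam1 has increasing marginals (supermodular)
  have hlam1_super : ∀ (i : Fin k) (A B : Finset E), A ⊆ B → ∀ x, x ∉ B →
      lam1 i (insert x A) - lam1 i A ≤ lam1 i (insert x B) - lam1 i B := by
    intro i A B hAB x hxB
    have hxA : x ∉ A := fun h => hxB (hAB h)
    by_cases hx : x ∈ p i ∩ E1
    · have hne : (p i ∩ E1).Nonempty := ⟨x, hx⟩
      simp only [lam1, dif_pos hne]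
      by_cases hW : ((p i ∩ E1).erase x).Nonempty
      · have hT : p i ∩ E1 = insert x ((p i ∩ E1).erase x) :=
          (Finset.insert_erase hx).symm
        have key : ∀ (CD : E → ℝ),
            (p i ∩ E1).inf' hne CD
              = min (CD x) (((p i ∩ E1).erase x).inf' hW CD) := by
          intro CD
          rw [Finset.inf'_congr hne hT fun e _ => rfl, Finset.inf'_insert hW CD]
        have hWinf : ∀ (D : Finset E),
            ((p i ∩ E1).erase x).inf' hW (Ct (insert x D))
              = ((p i ∩ E1).erase x).inf' hW (Ct D) := by
          intro D
          exact Finset.inf'_congr hW rfl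
            (fun e he => hCt_ne D x e (Finset.ne_of_mem_erase he))
        rw [key, key, key, key, hWinf, hWinf, hCt_self, hCt_self,
          hCt_notmem A x hxA, hCt_notmem B x hxB]
        set tA := ((p i ∩ E1).erase x).inf' hW (Ct A) with htA
        set tB := ((p i ∩ E1).erase x).inf' hW (Ct B) with htB
        have htBA : tB ≤ tA := hinf_mono A B hAB _ hW
        rw [min_left_comm (lam i) (C x - γ) tA, min_left_comm (lam i) (C x) tA,
          min_left_comm (lam i) (C x - γ) tB, min_left_comm (lam i) (C x) tB]
        exact min_marg_aux (by linarith) (min_le_min le_rfl htBA)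
      · have hempty : (p i ∩ E1).erase x = ∅ := Finset.not_nonempty_iff_eq_empty.mp hW
        have hsingle : p i ∩ E1 = {x} := by
          rw [← Finset.insert_erase hx, hempty]; rfl
        have key : ∀ (CD : E → ℝ), (p i ∩ E1).inf' hne CD = CD x := by
          intro CD
          rw [Finset.inf'_congr hne hsingle fun e _ => rfl]
          rfl
        rw [key, key, key, key, hCt_self, hCt_self,
          hCt_notmem A x hxA, hCt_notmem B x hxB]
    · rw [hlam1_notmem i A x hx, hlam1_notmem i B x hx]
      simp
  -- lam2 facts
  have hlam2_anti : ∀ (i : Fin k) (A B : Finset E), A ⊆ B → lam2 i B ≤ lam2 i A := by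
    intro i A B hAB
    simp only [lam2]
    exact mul_le_mul (hlam1_anti i A B hAB) (hΔ_anti i A B hAB)
      (hΔ_nonneg i B) (hlam1_nonneg i A)
  have hE1E2 : ∀ e, e ∈ E1 → e ∉ E2 := by
    intro e h1 h2
    simp only [E1, E2, Finset.mem_filter] at h1 h2
    omega
  have hlam2_super : ∀ (i : Fin k) (A B : Finset E), A ⊆ B → ∀ x, x ∉ B →
      lam2 i (insert x A) - lam2 i A ≤ lam2 i (insert x B) - lam2 i B := by
    intro i A B hAB x hxB
    simp only [lam2]
    by_cases hx1 : x ∈ p i ∩ E1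
    · have hx2 : x ∉ p i ∩ E2 := fun h =>
        hE1E2 x (Finset.mem_of_mem_inter_right hx1) (Finset.mem_of_mem_inter_right h)
      rw [hΔ_notmem i A x hx2, hΔ_notmem i B x hx2]
      have h1 := hlam1_super i A B hAB x hxB
      have h2 : lam1 i (insert x B) - lam1 i B ≤ 0 := by
        have := hlam1_anti i B (insert x B) (Finset.subset_insert x B)
        linarith
      have h3 := hΔ_anti i A B hAB
      have h4 := hΔ_nonneg i B
      have e1 : (lam1 i (insert x A) - lam1 i A) * Δ i A
          ≤ (lam1 i (insert x A) - lam1 i A) * Δ i B :=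
        mul_le_mul_of_nonpos_left h3 (by linarith)
      have e2 : (lam1 i (insert x A) - lam1 i A) * Δ i B
          ≤ (lam1 i (insert x B) - lam1 i B) * Δ i B :=
        mul_le_mul_of_nonneg_right h1 h4
      nlinarith [e1, e2]
    · rw [hlam1_notmem i A x hx1, hlam1_notmem i B x hx1]
      have h1 := hΔ_super i A B hAB x hxB
      have h2 : Δ i (insert x B) - Δ i B ≤ 0 := by
        have := hΔ_anti i B (insert x B) (Finset.subset_insert x B)
        linarith
      have h3 := hlam1_anti i A B hAB
      have h4 := hlam1_nonneg i B
      have e1 : lam1 i A * (Δ i (insert x A) - Δ i A)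
          ≤ lam1 i B * (Δ i (insert x A) - Δ i A) :=
        mul_le_mul_of_nonpos_right h3 (by linarith)
      have e2 : lam1 i B * (Δ i (insert x A) - Δ i A)
          ≤ lam1 i B * (Δ i (insert x B) - Δ i B) :=
        mul_le_mul_of_nonneg_left h1 h4
      nlinarith [e1, e2]
  -- Monotonicity
  have hmono : ∀ (A B : Finset E), A ⊆ B → Lbar A ≤ Lbar B := by
    intro A B hAB
    simp only [Lbar]
    refine Finset.sum_le_sum fun i _ => ?_
    have := hlam2_anti i A B hAB
    linarith
  refine ⟨hmono, ?_⟩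
  intro A B hAB e
  by_cases he : e ∈ B
  · rw [Finset.insert_eq_self.mpr he]
    have h1 : Lbar A ≤ Lbar (insert e A) := hmono A (insert e A) (Finset.subset_insert e A)
    linarith
  · rw [ge_iff_le]
    simp only [Lbar]
    rw [← Finset.sum_sub_distrib, ← Finset.sum_sub_distrib]
    refine Finset.sum_le_sum fun i _ => ?_
    have := hlam2_super i A B hAB e he
    linarith
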